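/- Let G be a group with a convergence group action on a compact metrizable space M with at least three points, and let H be a dynamically quasiconvex subgroup of G with |Λ(H)| ≥ 2. Then H has finite index in its commensurator in G; in particular, H has finite index in its normalizer in G. -/

import Mathlib

open Pointwise Filter Topology Set

section ConvergenceGroups

variable (G M : Type*) [Group G] [TopologicalSpace M] [MulAction G M]

/-- A convergence group action: the action is by homeomorphisms (each element acts
continuously, hence as a homeomorphism since the action is by a group), and the induced
diagonal action on the space of distinct triples of points of `M` is properly
discontinuous. -/
def IsConvergenceAction : Prop :=
  (∀ g : G, Continuous fun x : M => g • x) ∧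
    ∀ K L : Set (M × M × M), IsCompact K → IsCompact L →
      (∀ t ∈ K ∪ L, t.1 ≠ t.2.1 ∧ t.1 ≠ t.2.2 ∧ t.2.1 ≠ t.2.2) →
      {g : G | ((g • K) ∩ L).Nonempty}.Finite

/-- The limit set of a subgroup `H ≤ G`: the set of accumulation points in `M` of
the `H`-orbits of points of `M`. -/
def limitSet (H : Subgroup G) : Set M :=
  {x : M | ∃ m : M, x ∈ closure (((fun h : G => h • m) '' (H : Set G)) \ {x})}

/-- `z` is a conical limit point of the subgroup `H`. -/
def IsConicalLimitPoint (H : Subgroup G) (z : M) : Prop :=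
  ∃ (h : ℕ → G) (a b : M), (∀ n, h n ∈ H) ∧ a ≠ b ∧
    Tendsto (fun n => h n • z) atTop (nhds a) ∧
    ∀ q : M, q ≠ z → Tendsto (fun n => h n • q) atTop (nhds b)

/-- `g` is loxodromic: it has infinite order and fixes exactly two points of `M`. -/
def IsLoxodromic (g : G) : Prop :=
  ¬ IsOfFinOrder g ∧ {x : M | g • x = x}.encard = 2

/-- `p` is a bounded parabolic point of the subgroup `H`: its stabilizer in `H` is an
infinite subgroup containing no loxodromic element, which acts cocompactly on
`Λ(H) \ {p}`. -/
def IsBoundedParabolicPoint (H : Subgroup G) (p : M) : Prop :=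
  ((H ⊓ MulAction.stabilizer G p : Subgroup G) : Set G).Infinite ∧
  (∀ g ∈ H ⊓ MulAction.stabilizer G p, ¬ IsLoxodromic G M g) ∧
  ∃ C : Set M, IsCompact C ∧ C ⊆ limitSet G M H \ {p} ∧
    limitSet G M H \ {p} ⊆ ⋃ g ∈ (H ⊓ MulAction.stabilizer G p : Subgroup G), g • C

/-- `H` is dynamically quasiconvex: for every pair of disjoint closed subsets `K, L` of
`M`, the set of cosets `gH` with `gΛ(H)` meeting both `K` and `L` is finite. -/
def DynamicallyQuasiconvex (H : Subgroup G) : Prop :=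
  ∀ K L : Set M, IsClosed K → IsClosed L → Disjoint K L →
    ((fun g : G => (g : G ⧸ H)) ''
      {g : G | ((g • limitSet G M H) ∩ K).Nonempty ∧
               ((g • limitSet G M H) ∩ L).Nonempty}).Finite

end ConvergenceGroups


section Aux

open Pointwise

variable {G M : Type*} [Group G] [TopologicalSpace M] [MulAction G M]

lemma limitSet_mono {K H : Subgroup G} (hKH : K ≤ H) :
    limitSet G M K ⊆ limitSet G M H := by
  rintro x ⟨m, hx⟩
  exact ⟨m, closure_mono (Set.diff_subset_diff_left (Set.image_mono hKH)) hx⟩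

lemma smul_limitSet_subset (hcont : ∀ g : G, Continuous fun x : M => g • x)
    (g : G) (H : Subgroup G) :
    g • limitSet G M H ⊆ limitSet G M (ConjAct.toConjAct g • H) := by
  rintro _ ⟨x, ⟨m, hx⟩, rfl⟩
  refine ⟨g • m, ?_⟩
  have h1 : (fun y : M => g • y) '' (((fun h : G => h • m) '' (H : Set G)) \ {x}) ⊆
      ((fun h : G => h • (g • m)) ''
        ((ConjAct.toConjAct g • H : Subgroup G) : Set G)) \ {g • x} := by
    rintro _ ⟨y, ⟨⟨h, hh, rfl⟩, hy⟩, rfl⟩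
    refine ⟨⟨g * h * g⁻¹, ?_, ?_⟩, ?_⟩
    · rw [SetLike.mem_coe, Subgroup.mem_pointwise_smul_iff_inv_smul_mem]
      simpa [ConjAct.smul_def, mul_assoc] using hh
    · simp [smul_smul, mul_assoc]
    · simp only [Set.mem_singleton_iff]
      intro hc
      exact hy (smul_left_cancel g hc)
  have h2 : g • x ∈
      closure ((fun y : M => g • y) '' (((fun h : G => h • m) '' (H : Set G)) \ {x})) :=
    image_closure_subset_closure_image (hcont g) ⟨x, hx, rfl⟩
  exact closure_mono h1 h2

lemma smul_limitSet_eq (hcont : ∀ g : G, Continuous fun x : M => g • x)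
    (g : G) (H : Subgroup G) :
    limitSet G M (ConjAct.toConjAct g • H) = g • limitSet G M H := by
  refine subset_antisymm ?_ (smul_limitSet_subset hcont g H)
  intro x hx
  have h1 := smul_limitSet_subset hcont g⁻¹ (ConjAct.toConjAct g • H)
    ⟨x, hx, rfl⟩
  have h2 : ConjAct.toConjAct g⁻¹ • (ConjAct.toConjAct g • H) = H := by
    rw [smul_smul, ← map_mul, inv_mul_cancel, map_one, one_smul]
  rw [h2] at h1
  exact ⟨g⁻¹ • x, h1, by simp⟩

lemma limitSet_subset_of_finite_relindex {K H : Subgroup G} (hKH : K ≤ H)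
    (hfin : K.relIndex H ≠ 0) : limitSet G M H ⊆ limitSet G M K := by
  rintro x ⟨m, hx⟩
  haveI : Finite (H ⧸ K.subgroupOf H) := by
    rw [Subgroup.relIndex, Subgroup.index] at hfin
    exact (Nat.card_ne_zero.mp hfin).2
  have hcover : ((fun h : G => h • m) '' (H : Set G)) \ {x} =
      ⋃ q : H ⧸ K.subgroupOf H,
        (((fun h : G => h • ((((Quotient.out q : H) : G))⁻¹ • m)) '' (K : Set G)) \ {x}) := by
    ext y
    constructor
    · rintro ⟨⟨h, hh, rfl⟩, hy⟩
      set q : H ⧸ K.subgroupOf H := QuotientGroup.mk (⟨h, hh⟩ : H)⁻¹ with hqdef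
      have hmk : QuotientGroup.mk (Quotient.out q) = q := Quotient.out_eq' q
      have hq : (Quotient.out q)⁻¹ * (⟨h, hh⟩ : H)⁻¹ ∈ K.subgroupOf H :=
        QuotientGroup.eq.mp (hmk.trans hqdef)
      rw [Subgroup.mem_subgroupOf] at hq
      refine Set.mem_iUnion.mpr ⟨q, ⟨⟨(((Quotient.out q : H) : G)⁻¹ * h⁻¹)⁻¹,
        K.inv_mem hq, ?_⟩, hy⟩⟩
      simp [smul_smul, mul_assoc]
    · rintro hy
      obtain ⟨q, ⟨⟨k, hk, rfl⟩, hne⟩⟩ := Set.mem_iUnion.mp hy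
      exact ⟨⟨k * ((Quotient.out q : H) : G)⁻¹,
        H.mul_mem (hKH hk) (H.inv_mem (Quotient.out q).2), by simp [mul_smul]⟩, hne⟩
  rw [hcover, closure_iUnion_of_finite] at hx
  obtain ⟨q, hq⟩ := Set.mem_iUnion.mp hx
  exact ⟨_, hq⟩

lemma comm_smul_limitSet (hcont : ∀ g : G, Continuous fun x : M => g • x)
    {H : Subgroup G} {g : G} (hg : g ∈ Subgroup.Commensurable.commensurator H) :
    g • limitSet G M H = limitSet G M H := by
  rw [Subgroup.Commensurable.commensurator_mem_iff] at hg
  obtain ⟨h1, h2⟩ := hg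
  set Hg := ConjAct.toConjAct g • H with hHg
  have e1 : limitSet G M H ⊆ limitSet G M (Hg ⊓ H) :=
    limitSet_subset_of_finite_relindex inf_le_right
      (by rwa [Subgroup.inf_relIndex_right])
  have e2 : limitSet G M Hg ⊆ limitSet G M (H ⊓ Hg) :=
    limitSet_subset_of_finite_relindex inf_le_right
      (by rwa [Subgroup.inf_relIndex_right])
  have key : limitSet G M H = limitSet G M Hg :=
    subset_antisymm (e1.trans (limitSet_mono inf_le_left))
      (e2.trans (limitSet_mono inf_le_left))
  rw [← smul_limitSet_eq hcont g H, ← hHg, ← key]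

lemma relindex_ne_zero_of_image_finite {H C : Subgroup G}
    (hfin : ((fun g : G => (g : G ⧸ H)) '' (C : Set G)).Finite) : H.relIndex C ≠ 0 := by
  haveI := hfin.to_subtype
  let F : C ⧸ H.subgroupOf C → G ⧸ H :=
    Quotient.lift (fun c : C => ((c : G) : G ⧸ H)) (by
      intro a b hab
      have hab' := QuotientGroup.leftRel_apply.mp hab
      rw [Subgroup.mem_subgroupOf] at hab'
      exact QuotientGroup.eq.mpr (by simpa using hab'))
  have hmem : ∀ x : C ⧸ H.subgroupOf C,
      F x ∈ ((fun g : G => (g : G ⧸ H)) '' (C : Set G)) := by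
    intro x
    induction x using Quotient.inductionOn with
    | h a => exact ⟨a, a.2, rfl⟩
  have hinj : Function.Injective F := by
    intro x y
    induction x using Quotient.inductionOn with
    | h a =>
      induction y using Quotient.inductionOn with
      | h b =>
        intro hab
        have : (a : G)⁻¹ * b ∈ H := QuotientGroup.eq.mp hab
        exact Quotient.sound (QuotientGroup.leftRel_apply.mpr
          (Subgroup.mem_subgroupOf.mpr (by simpa using this)))
  haveI : Finite (C ⧸ H.subgroupOf C) :=
    Finite.of_injective (fun x => (⟨F x, hmem x⟩ :
      ((fun g : G => (g : G ⧸ H)) '' (C : Set G))))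
      (fun a b hab => hinj (Subtype.ext_iff.mp hab))
  rw [Subgroup.relIndex]
  exact Subgroup.index_ne_zero_of_finite

lemma normalizer_le_commensurator (H : Subgroup G) :
    Subgroup.normalizer (H : Set G) ≤ Subgroup.Commensurable.commensurator H := by
  intro g hg
  rw [Subgroup.mem_normalizer_iff] at hg
  rw [Subgroup.Commensurable.commensurator_mem_iff]
  have : ConjAct.toConjAct g • H = H := by
    ext x
    rw [Subgroup.mem_pointwise_smul_iff_inv_smul_mem]
    simp only [ConjAct.smul_def, map_inv, ConjAct.ofConjAct_inv, ConjAct.ofConjAct_toConjAct,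
      inv_inv]
    constructor
    · intro hx
      have := (hg (g⁻¹ * x * g)).mp hx
      simpa [mul_assoc] using this
    · intro hx
      exact (hg (g⁻¹ * x * g)).mpr (by simpa [mul_assoc] using hx)
  rw [this]

end Aux

/-- a dynamically quasiconvex subgroup with at least two limit points has
finite index in its commensurator, and in particular in its normalizer. -/
theorem finite_index_in_commensurator
    {G M : Type*} [Group G] [TopologicalSpace M] [CompactSpace M]
    [TopologicalSpace.MetrizableSpace M] [MulAction G M]
    (hconv : IsConvergenceAction G M)
    (h3 : ∃ a b c : M, a ≠ b ∧ a ≠ c ∧ b ≠ c)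
    (H : Subgroup G) (hdqc : DynamicallyQuasiconvex G M H)
    (hΛ : 2 ≤ (limitSet G M H).encard) :
    H.relIndex (Subgroup.Commensurable.commensurator H) ≠ 0 ∧
      H.relIndex (Subgroup.normalizer (H : Set G)) ≠ 0 := by
  obtain ⟨hcont, -⟩ := hconv
  obtain ⟨a, b, ha, hb, hab⟩ :=
    Set.one_lt_encard_iff.mp (lt_of_lt_of_le (by norm_num) hΛ)
  have hfin := hdqc {a} {b} isClosed_singleton isClosed_singleton
    (Set.disjoint_singleton.mpr hab)
  have hsub : (Subgroup.Commensurable.commensurator H : Set G) ⊆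
      {g : G | ((g • limitSet G M H) ∩ {a}).Nonempty ∧
               ((g • limitSet G M H) ∩ {b}).Nonempty} := by
    intro g hg
    have hinv := comm_smul_limitSet hcont hg
    exact ⟨⟨a, by rw [hinv]; exact ⟨ha, rfl⟩⟩, ⟨b, by rw [hinv]; exact ⟨hb, rfl⟩⟩⟩
  have hC : ((fun g : G => (g : G ⧸ H)) '' (Subgroup.Commensurable.commensurator H : Set G)).Finite :=
    hfin.subset (Set.image_mono hsub)
  have hN : ((fun g : G => (g : G ⧸ H)) '' (Subgroup.normalizer (H : Set G) : Set G)).Finite :=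
    hC.subset (Set.image_mono (normalizer_le_commensurator H))
  exact ⟨relindex_ne_zero_of_image_finite hC, relindex_ne_zero_of_image_finite hN⟩
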